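/- Let k be a nonzero unital ring and n ≥ 2 an integer. There is no Grothendieck topology J on RingCatᵒᵖ such that both: (i) the sieve on the object corresponding to kⁿ generated by the morphisms opposite to the projections πᵢ : kⁿ → k (i = 1,…,n) is J-covering, and (ii) the representable presheaf on RingCatᵒᵖ associated to the trivial ring — i.e., the functor RingCat → Set sending a ring R to the set of unital ring homomorphisms from the trivial ring 0 to R — is a J-sheaf. -/

import Mathlib

universe u

open CategoryTheory Opposite

section aux

variable {k : Type u} [Ring k]

lemma matrix_zero_eq_one {Z : Type*} [Ring Z]
    (v : Matrix (Fin 2) (Fin 2) k →+* Z) (j j' : Fin 2) (hne : j ≠ j')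
    (h : v (Matrix.single j j 1) = 1) : (0 : Z) = 1 := by
  have hsum : Matrix.single j j (1 : k) + Matrix.single j' j' 1 = 1 := by
    ext a b
    fin_cases j <;> fin_cases j' <;> simp_all <;> fin_cases a <;> fin_cases b <;>
      simp [Matrix.single, Matrix.one_apply]
  have h2 : v (Matrix.single j' j' 1) = 0 := by
    have := congrArg v hsum
    rw [map_add, map_one, h, add_eq_left] at this
    exact this
  have h3 : v (Matrix.single j j 1)
      = v (Matrix.single j j' 1) * v (Matrix.single j' j' 1)
        * v (Matrix.single j' j 1) := by
    rw [← map_mul, ← map_mul, Matrix.single_mul_single_same, Matrix.single_mul_single_same]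
    norm_num
  rw [h, h2] at h3
  simpa using h3.symm

/-- The diagonal embedding `kⁿ →+* M₂(k)` using the first two coordinates. -/
def uHom (n : ℕ) (hn : 2 ≤ n) : (Fin n → k) →+* Matrix (Fin 2) (Fin 2) k :=
  (Matrix.diagonalRingHom (Fin 2) k).comp
    (Pi.ringHom fun j => Pi.evalRingHom (fun _ : Fin n => k) (Fin.castLE hn j))

/-- The "indicator" idempotent of the `i`-th coordinate. -/
def eIdem (n : ℕ) (i : Fin n) : Fin n → k := fun m => if m = i then 1 else 0

lemma key {n : ℕ} (hn : 2 ≤ n) (i : Fin n) {Z : Type*} [Ring Z]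
    (v : Matrix (Fin 2) (Fin 2) k →+* Z)
    (hv : v (uHom n hn (eIdem n i)) = 1) : (0 : Z) = 1 := by
  have hu : uHom (k := k) n hn (eIdem n i)
      = Matrix.diagonal (fun j : Fin 2 => if Fin.castLE hn j = i then 1 else 0) := by
    simp [uHom, Matrix.diagonalRingHom, Pi.ringHom, RingHom.pi, eIdem]
    rfl
  by_cases hi : ∃ j : Fin 2, Fin.castLE hn j = i
  · obtain ⟨j, rfl⟩ := hi
    have hd : uHom (k := k) n hn (eIdem n (Fin.castLE hn j))
        = Matrix.single j j 1 := by
      rw [hu]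
      ext a b
      fin_cases j <;> fin_cases a <;> fin_cases b <;>
        simp [Matrix.diagonal_apply, Matrix.single_apply, Fin.castLE_inj]
    rw [hd] at hv
    exact matrix_zero_eq_one v j (if j = 0 then 1 else 0) (by fin_cases j <;> simp) hv
  · have hz : uHom (k := k) n hn (eIdem n i) = 0 := by
      rw [hu]
      have : (fun j : Fin 2 => if Fin.castLE hn j = i then (1 : k) else 0) = 0 := by
        funext j
        simp only [Pi.zero_apply, ite_eq_right_iff]
        exact fun hc => absurd ⟨j, hc⟩ hi
      rw [this]
      exact Matrix.diagonal_zero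
    rw [hz, map_zero] at hv
    exact hv

end aux

section cat

def fromPUnit {Z : Type u} [Ring Z] (h : (0 : Z) = 1) : PUnit.{u+1} →+* Z where
  toFun _ := 0
  map_one' := h
  map_mul' _ _ := by simp
  map_zero' := rfl
  map_add' _ _ := by simp

lemma punit_hom_eq {R : Type*} [Ring R] (a b : PUnit.{u+1} →+* R) : a = b :=
  RingHom.ext fun x => by
    rw [Subsingleton.elim x (0 : PUnit.{u+1}), map_zero, map_zero]

lemma hom_to_op_punit_eq (Y : RingCat.{u}ᵒᵖ)
    (a b : Y ⟶ op (RingCat.of PUnit.{u+1})) : a = b :=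
  Quiver.Hom.unop_inj (RingCat.hom_ext (punit_hom_eq a.unop.hom b.unop.hom))

end cat

theorem stmt_5 (k : Type u) [Ring k] [Nontrivial k] (n : ℕ) (hn : 2 ≤ n) :
    ¬ ∃ J : GrothendieckTopology RingCat.{u}ᵒᵖ,
      (Sieve.generate
          (Presieve.ofArrows (fun _ : Fin n => op (RingCat.of k))
            (fun i => (RingCat.ofHom (Pi.evalRingHom (fun _ : Fin n => k) i)).op)) ∈
        J (op (RingCat.of (Fin n → k)))) ∧
      Presieve.IsSheaf J (yoneda.obj (op (RingCat.of PUnit.{u + 1}))) := by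
  rintro ⟨J, hS, hF⟩
  set P0 : RingCat.{u} := RingCat.of PUnit.{u+1} with hP0
  set B : RingCat.{u} := RingCat.of (Matrix (Fin 2) (Fin 2) k) with hB
  set S : Sieve (op (RingCat.of (Fin n → k))) := Sieve.generate
          (Presieve.ofArrows (fun _ : Fin n => op (RingCat.of k))
            (fun i => (RingCat.ofHom (Pi.evalRingHom (fun _ : Fin n => k) i)).op)) with hSdef
  let f : op B ⟶ op (RingCat.of (Fin n → k)) := (RingCat.ofHom (uHom (k := k) n hn)).op
  have hT : S.pullback f ∈ J (op B) := J.pullback_stable f hS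
  have htriv : ∀ (YY : RingCat.{u}ᵒᵖ) (g : YY ⟶ op B), (S.pullback f).arrows g →
      (0 : YY.unop) = 1 := by
    intro YY g hg
    obtain ⟨W, h, g', hg', comm⟩ := hg
    obtain ⟨i⟩ := hg'
    have comm' := congrArg Quiver.Hom.unop comm
    simp only [unop_comp, Quiver.Hom.unop_op] at comm'
    have h1 := DFunLike.congr_fun (congrArg RingCat.Hom.hom comm') (eIdem n i)
    have h1' : h.unop ((Pi.evalRingHom (fun _ : Fin n => k) i) (eIdem n i))
        = g.unop (uHom (k := k) n hn (eIdem n i)) := h1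
    have h2 : (Pi.evalRingHom (fun _ : Fin n => k) i) (eIdem n i) = 1 := by
      show eIdem (k := k) n i i = 1
      simp [eIdem]
    rw [h2, map_one] at h1'
    exact key hn i (g.unop.hom : Matrix (Fin 2) (Fin 2) k →+* YY.unop) h1'.symm
  have hsheaf := hF _ hT
  let x : Presieve.FamilyOfElements (yoneda.obj (op P0)) (S.pullback f).arrows :=
    fun Y g hg => (show P0 ⟶ Y.unop from RingCat.ofHom (fromPUnit (htriv Y g hg))).op
  have hcompat : x.Compatible := by
    intro Y₁ Y₂ Z g₁ g₂ f₁ f₂ h₁ h₂ _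
    exact hom_to_op_punit_eq Z _ _
  obtain ⟨t, _, _⟩ := hsheaf x hcompat
  have hmat : (1 : Matrix (Fin 2) (Fin 2) k) = 0 := by
    have h1 : (t.unop.hom : PUnit.{u+1} →+* Matrix (Fin 2) (Fin 2) k) 1 = 1 := map_one _
    have h0 : (t.unop.hom : PUnit.{u+1} →+* Matrix (Fin 2) (Fin 2) k) 0 = 0 := map_zero _
    rw [Subsingleton.elim (1 : PUnit.{u+1}) 0, h0] at h1
    exact h1.symm
  have h00 := congrFun (congrFun hmat 0) 0
  rw [Matrix.one_apply_eq, Matrix.zero_apply] at h00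
  exact one_ne_zero h00
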